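/- Fix integers n ≥ 1 and k_lin ≥ 0, and constants μ > 0, λ̂ ≥ 0, M ≥ 0, ν > 0, ρ ∈ [0,1), and 0 < μ̃ ≤ μ/2. Let A₀, A₁, … and B₀, B₁, … be symmetric d×d matrices and w₀, w₁, …, w* ∈ ℝ^d such that: (i) A_i ⪰ −λ̂·I and B_i ⪰ −λ̂·I for all i; (ii) there is a symmetric matrix H* ⪰ μ·I with (1/n)∑_{i=j}^{j+n−1} B_i = H* for every j ≥ 0 (cyclic sampling of a partition); (iii) ‖A_i − B_i‖ ≤ M‖w_i − w*‖ for all i ≥ k_lin, and ∑_{i=k_lin}^∞ ‖w_i − w*‖ ≤ ν/(μ(1 − √ρ)). Then for every k ≥ k_non := max{ 4(1 + λ̂/μ)(k_lin + n − 1), 4Mν/(μ²(1 − √ρ)) } − 1, the average Ĥ_k = (1/(k+1))∑_{i=0}^k A_i satisfies Ĥ_k ⪰ (μ/2)·I ⪰ μ̃·I; in particular the positive-definiteness modification of the averaged Hessian is inactive for all such k. -/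

import Mathlib

open Finset
open scoped RealInnerProductSpace

noncomputable section

abbrev Vec (d : ℕ) := EuclideanSpace ℝ (Fin d)

set_option maxHeartbeats 4000000 in
/-- Under deterministic cyclic sampling, the uniformly averaged Hessians
eventually stay uniformly positive definite, so the positive definiteness modification
becomes inactive. -/
theorem averaged_hessian_eventually_positive_definite_cyclic {d : ℕ}
    (n klin : ℕ) (hn : 1 ≤ n)
    (μ lamhat M ν ρ μt : ℝ)
    (hμ : 0 < μ) (hlam : 0 ≤ lamhat) (hM : 0 ≤ M) (hν : 0 < ν)
    (hρ0 : 0 ≤ ρ) (hρ1 : ρ < 1) (hμt0 : 0 < μt) (hμt : μt ≤ μ / 2)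
    (A B : ℕ → (Vec d →L[ℝ] Vec d)) (w : ℕ → Vec d) (wstar : Vec d)
    (hAsym : ∀ i, IsSelfAdjoint (A i)) (hBsym : ∀ i, IsSelfAdjoint (B i))
    (hAlb : ∀ i (v : Vec d), -lamhat * ‖v‖ ^ 2 ≤ ⟪A i v, v⟫)
    (hBlb : ∀ i (v : Vec d), -lamhat * ‖v‖ ^ 2 ≤ ⟪B i v, v⟫)
    (Hstar : Vec d →L[ℝ] Vec d) (hHsym : IsSelfAdjoint Hstar)
    (hHlb : ∀ v : Vec d, μ * ‖v‖ ^ 2 ≤ ⟪Hstar v, v⟫)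
    (hcyc : ∀ j : ℕ, (n : ℝ)⁻¹ • ∑ i ∈ Finset.Ico j (j + n), B i = Hstar)
    (hAB : ∀ i, klin ≤ i → ‖A i - B i‖ ≤ M * ‖w i - wstar‖)
    (hsum : ∀ K : ℕ, ∑ i ∈ Finset.Ico klin K, ‖w i - wstar‖ ≤
      ν / (μ * (1 - Real.sqrt ρ)))
    (k : ℕ)
    (hk : max (4 * (1 + lamhat / μ) * ((klin : ℝ) + n - 1))
        (4 * M * ν / (μ ^ 2 * (1 - Real.sqrt ρ))) - 1 ≤ (k : ℝ)) :
    (∀ v : Vec d, μ / 2 * ‖v‖ ^ 2 ≤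
      ⟪(((k : ℝ) + 1)⁻¹ • ∑ i ∈ Finset.range (k + 1), A i) v, v⟫) ∧
    (∀ v : Vec d, μt * ‖v‖ ^ 2 ≤
      ⟪(((k : ℝ) + 1)⁻¹ • ∑ i ∈ Finset.range (k + 1), A i) v, v⟫) := by
  have hsρ : Real.sqrt ρ < 1 := by
    rw [show (1:ℝ) = Real.sqrt 1 by simp]
    exact Real.sqrt_lt_sqrt hρ0 hρ1
  have hD : 0 < 1 - Real.sqrt ρ := by linarith
  set D := 1 - Real.sqrt ρ with hDdef
  set C := ν / (μ * D) with hCdef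
  have hC0 : 0 ≤ C := by positivity
  have hn1 : (1:ℝ) ≤ (n:ℝ) := by exact_mod_cast hn
  have hkl0 : (0:ℝ) ≤ (klin:ℝ) := Nat.cast_nonneg _
  have hX0 : (0:ℝ) ≤ (klin:ℝ) + n - 1 := by linarith
  have h1 : 4 * (1 + lamhat / μ) * ((klin : ℝ) + n - 1) ≤ (k : ℝ) + 1 := by
    have := le_max_left (4 * (1 + lamhat / μ) * ((klin : ℝ) + n - 1))
      (4 * M * ν / (μ ^ 2 * D))
    linarith
  have h2 : 4 * M * ν / (μ ^ 2 * D) ≤ (k : ℝ) + 1 := by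
    have := le_max_right (4 * (1 + lamhat / μ) * ((klin : ℝ) + n - 1))
      (4 * M * ν / (μ ^ 2 * D))
    linarith
  have hh1 : 4 * (((klin:ℝ) + n - 1) * (μ + lamhat)) ≤ ((k:ℝ) + 1) * μ := by
    have h := mul_le_mul_of_nonneg_right h1 hμ.le
    have e : 4 * (1 + lamhat / μ) * ((klin : ℝ) + n - 1) * μ
        = 4 * (((klin:ℝ) + n - 1) * (μ + lamhat)) := by
      field_simp
    linarith [e ▸ h]
  have hh2 : 4 * (M * C) ≤ ((k:ℝ) + 1) * μ := by
    have h := mul_le_mul_of_nonneg_right h2 hμ.le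
    have e : 4 * M * ν / (μ ^ 2 * D) * μ = 4 * (M * C) := by
      rw [hCdef]; field_simp
    linarith [e ▸ h]
  have hkey : ((klin:ℝ) + n - 1) * (μ + lamhat) + M * C ≤ ((k:ℝ) + 1) * (μ / 2) := by
    nlinarith
  have hklR : (klin:ℝ) ≤ (k:ℝ) + 1 := by
    nlinarith [mul_nonneg (div_nonneg hlam hμ.le) hX0]
  have hklin : klin ≤ k + 1 := by
    have h : (klin:ℝ) ≤ ((k+1:ℕ):ℝ) := by push_cast; linarith
    exact_mod_cast h
  -- arithmetic on indices
  set m := k + 1 - klin with hmdef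
  have hm : klin + m = k + 1 := by omega
  set q := m / n with hqdef
  set r := m % n with hrdef
  have hqr : q * n + r = m := by rw [mul_comm]; exact Nat.div_add_mod m n
  have hrn : r < n := Nat.mod_lt _ (by omega)
  have hq2 : klin + q * n ≤ k + 1 := by omega
  have hcard : (k + 1) - (klin + q * n) = r := by omega
  have main : ∀ v : Vec d,
      ((k:ℝ) + 1) * (μ / 2) * ‖v‖ ^ 2 ≤ ∑ i ∈ Finset.range (k + 1), ⟪A i v, v⟫ := by
    intro v
    have ht : (0:ℝ) ≤ ‖v‖ ^ 2 := by positivity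
    -- one full block of B's
    have hblock : ∀ j : ℕ, (n:ℝ) * (μ * ‖v‖ ^ 2) ≤ ∑ i ∈ Finset.Ico j (j + n), ⟪B i v, v⟫ := by
      intro j
      have hn0 : (n:ℝ) ≠ 0 := Nat.cast_ne_zero.mpr (by omega)
      have hs : ∑ i ∈ Finset.Ico j (j + n), B i = (n:ℝ) • Hstar := by
        calc ∑ i ∈ Finset.Ico j (j + n), B i
            = (n:ℝ) • ((n:ℝ)⁻¹ • ∑ i ∈ Finset.Ico j (j + n), B i) := by
              rw [smul_smul, mul_inv_cancel₀ hn0, one_smul]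
          _ = (n:ℝ) • Hstar := by rw [hcyc j]
      have e : ∑ i ∈ Finset.Ico j (j + n), ⟪B i v, v⟫
          = ⟪(∑ i ∈ Finset.Ico j (j + n), B i) v, v⟫ := by
        rw [ContinuousLinearMap.sum_apply, sum_inner]
      rw [e, hs, ContinuousLinearMap.smul_apply, real_inner_smul_left]
      have := hHlb v
      have hnn : (0:ℝ) ≤ (n:ℝ) := Nat.cast_nonneg n
      nlinarith
    -- q consecutive blocks
    have hmulti : ∀ (p j : ℕ),
        (p:ℝ) * ((n:ℝ) * (μ * ‖v‖ ^ 2)) ≤ ∑ i ∈ Finset.Ico j (j + p * n), ⟪B i v, v⟫ := by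
      intro p
      induction p with
      | zero => intro j; simp
      | succ p ih =>
          intro j
          have e : j + (p + 1) * n = (j + p * n) + n := by ring
          rw [e, ← Finset.sum_Ico_consecutive (fun i => ⟪B i v, v⟫)
            (Nat.le_add_right j (p * n)) (Nat.le_add_right _ n)]
          have h1 := ih j
          have h2 := hblock (j + p * n)
          push_cast
          linarith
    -- lower bound by constants on a segment, for A
    have hlowA : (klin:ℝ) * (-lamhat * ‖v‖ ^ 2) ≤ ∑ i ∈ Finset.Ico 0 klin, ⟪A i v, v⟫ := by
      have h := Finset.sum_le_sum (fun i (_ : i ∈ Finset.Ico 0 klin) => hAlb i v)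
      simpa [Finset.sum_const, Nat.card_Ico, nsmul_eq_mul] using h
    -- remainder of B's
    have hlowB : (r:ℝ) * (-lamhat * ‖v‖ ^ 2)
        ≤ ∑ i ∈ Finset.Ico (klin + q * n) (k + 1), ⟪B i v, v⟫ := by
      have h := Finset.sum_le_sum
        (fun i (_ : i ∈ Finset.Ico (klin + q * n) (k + 1)) => hBlb i v)
      simpa [Finset.sum_const, Nat.card_Ico, hcard, nsmul_eq_mul] using h
    -- perturbation term
    have hABsum : -(M * C * ‖v‖ ^ 2)
        ≤ ∑ i ∈ Finset.Ico klin (k + 1), (⟪A i v, v⟫ - ⟪B i v, v⟫) := by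
      have hpt : ∀ i ∈ Finset.Ico klin (k + 1),
          -(M * ‖w i - wstar‖ * ‖v‖ ^ 2) ≤ ⟪A i v, v⟫ - ⟪B i v, v⟫ := by
        intro i hi
        have hik : klin ≤ i := (Finset.mem_Ico.mp hi).1
        have e : ⟪A i v, v⟫ - ⟪B i v, v⟫ = ⟪(A i - B i) v, v⟫ := by
          rw [ContinuousLinearMap.sub_apply, inner_sub_left]
        rw [e]
        have habs : |⟪(A i - B i) v, v⟫| ≤ ‖A i - B i‖ * ‖v‖ ^ 2 := by
          calc |⟪(A i - B i) v, v⟫| ≤ ‖(A i - B i) v‖ * ‖v‖ := abs_real_inner_le_norm _ _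
            _ ≤ ‖A i - B i‖ * ‖v‖ * ‖v‖ :=
              mul_le_mul_of_nonneg_right ((A i - B i).le_opNorm v) (norm_nonneg v)
            _ = ‖A i - B i‖ * ‖v‖ ^ 2 := by ring
        have h1 := hAB i hik
        have h2 := neg_abs_le ⟪(A i - B i) v, v⟫
        nlinarith [norm_nonneg (w i - wstar)]
      have h2 := Finset.sum_le_sum hpt
      have h3 : ∑ i ∈ Finset.Ico klin (k + 1), -(M * ‖w i - wstar‖ * ‖v‖ ^ 2)
          = -(M * ‖v‖ ^ 2 * ∑ i ∈ Finset.Ico klin (k + 1), ‖w i - wstar‖) := by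
        rw [Finset.mul_sum, ← Finset.sum_neg_distrib]
        exact Finset.sum_congr rfl (fun i _ => by ring)
      have h4 : M * ‖v‖ ^ 2 * (∑ i ∈ Finset.Ico klin (k + 1), ‖w i - wstar‖)
          ≤ M * ‖v‖ ^ 2 * C := by
        apply mul_le_mul_of_nonneg_left (hsum (k + 1)) (by positivity)
      rw [h3] at h2
      nlinarith
    -- decomposition of the full sum
    have e0 : ∑ i ∈ Finset.range (k + 1), ⟪A i v, v⟫
        = ∑ i ∈ Finset.Ico 0 klin, ⟪A i v, v⟫
          + ∑ i ∈ Finset.Ico klin (k + 1), ⟪A i v, v⟫ := by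
      rw [Finset.range_eq_Ico,
        ← Finset.sum_Ico_consecutive (fun i => ⟪A i v, v⟫) (Nat.zero_le klin) hklin]
    have e1 : ∑ i ∈ Finset.Ico klin (k + 1), ⟪A i v, v⟫
        = ∑ i ∈ Finset.Ico klin (k + 1), ⟪B i v, v⟫
          + ∑ i ∈ Finset.Ico klin (k + 1), (⟪A i v, v⟫ - ⟪B i v, v⟫) := by
      rw [← Finset.sum_add_distrib]
      exact Finset.sum_congr rfl (fun i _ => by ring)
    have e2 : ∑ i ∈ Finset.Ico klin (k + 1), ⟪B i v, v⟫
        = ∑ i ∈ Finset.Ico klin (klin + q * n), ⟪B i v, v⟫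
          + ∑ i ∈ Finset.Ico (klin + q * n) (k + 1), ⟪B i v, v⟫ := by
      rw [← Finset.sum_Ico_consecutive (fun i => ⟪B i v, v⟫) (Nat.le_add_right _ _) hq2]
    have hblocks := hmulti q klin
    -- coefficient inequality
    have hqnR : (q:ℝ) * (n:ℝ) = (k:ℝ) + 1 - klin - r := by
      have : ((q * n + r : ℕ):ℝ) = ((m : ℕ):ℝ) := congrArg (Nat.cast : ℕ → ℝ) hqr
      have hmR : ((m : ℕ):ℝ) = (k:ℝ) + 1 - klin := by
        have : ((klin + m : ℕ):ℝ) = ((k + 1 : ℕ):ℝ) := congrArg (Nat.cast : ℕ → ℝ) hm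
        push_cast at this; linarith
      push_cast at this
      linarith
    have hrR : (r:ℝ) ≤ (n:ℝ) - 1 := by
      have : (r:ℝ) + 1 ≤ (n:ℝ) := by exact_mod_cast Nat.succ_le_of_lt hrn
      linarith
    have hr0 : (0:ℝ) ≤ (r:ℝ) := Nat.cast_nonneg _
    have coeff : ((k:ℝ) + 1) * (μ / 2)
        ≤ (q:ℝ) * (n:ℝ) * μ - ((klin:ℝ) + r) * lamhat - M * C := by
      have hc1 : (klin:ℝ) + r ≤ (klin:ℝ) + n - 1 := by linarith
      nlinarith [mul_le_mul_of_nonneg_right hc1 hμ.le,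
        mul_le_mul_of_nonneg_right hc1 hlam]
    have step := mul_le_mul_of_nonneg_right coeff ht
    have expand : ((q:ℝ) * (n:ℝ) * μ - ((klin:ℝ) + r) * lamhat - M * C) * ‖v‖ ^ 2
        = (q:ℝ) * ((n:ℝ) * (μ * ‖v‖ ^ 2)) + (klin:ℝ) * (-lamhat * ‖v‖ ^ 2)
          + (r:ℝ) * (-lamhat * ‖v‖ ^ 2) + -(M * C * ‖v‖ ^ 2) := by ring
    rw [e0, e1, e2]
    linarith [step, hlowA, hlowB, hABsum, hblocks]
  have hk1 : (0:ℝ) < (k:ℝ) + 1 := by positivity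
  have goal1 : ∀ v : Vec d, μ / 2 * ‖v‖ ^ 2 ≤
      ⟪(((k : ℝ) + 1)⁻¹ • ∑ i ∈ Finset.range (k + 1), A i) v, v⟫ := by
    intro v
    rw [ContinuousLinearMap.smul_apply, real_inner_smul_left,
      ContinuousLinearMap.sum_apply, sum_inner]
    have h := mul_le_mul_of_nonneg_left (main v) (inv_nonneg.mpr hk1.le)
    have e : ((k:ℝ) + 1)⁻¹ * (((k:ℝ) + 1) * (μ / 2) * ‖v‖ ^ 2) = μ / 2 * ‖v‖ ^ 2 := by
      field_simp
    linarith [e ▸ h]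
  refine ⟨goal1, fun v => ?_⟩
  have := goal1 v
  nlinarith [sq_nonneg ‖v‖]
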